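/- Let P be a connected type-C poset of height one. If the relation graph RG(P) contains an even cycle, then g_C(P) is not contact. -/

import Mathlib

open scoped DirectSum

namespace LiePoset

/-- A type-C poset on the ground set `{-n, …, -1, 1, …, n} ⊆ ℤ`:
a partial order `le` supported on that set such that `i ≼ j` implies `i ≤ j` in `ℤ`,
and for `i ≠ -j`, `i ≼ j ↔ -j ≼ -i`. -/
structure TypeCPoset (n : ℕ) where
  le : ℤ → ℤ → Prop
  supp : ∀ ⦃i j : ℤ⦄, le i j → i ≠ 0 ∧ |i| ≤ (n : ℤ) ∧ j ≠ 0 ∧ |j| ≤ (n : ℤ)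
  refl : ∀ i : ℤ, i ≠ 0 → |i| ≤ (n : ℤ) → le i i
  antisymm : ∀ ⦃i j : ℤ⦄, le i j → le j i → i = j
  trans : ∀ ⦃i j k : ℤ⦄, le i j → le j k → le i k
  compat : ∀ ⦃i j : ℤ⦄, le i j → i ≤ j
  nsymm : ∀ ⦃i j : ℤ⦄, i ≠ -j → (le i j ↔ le (-j) (-i))

namespace TypeCPoset

variable {n : ℕ}

/-- The strict relation `i ≺ j` of a type-C poset. -/
def lt (P : TypeCPoset n) (i j : ℤ) : Prop := P.le i j ∧ i ≠ j

/-- `P` has height one: every chain of `P` has cardinality at most two. -/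
def HeightOne (P : TypeCPoset n) : Prop := ∀ i j k : ℤ, P.lt i j → P.lt j k → False

/-- `P` is separable: there is no relation `x ≺ y` with `x` negative and `y` positive. -/
def Separable (P : TypeCPoset n) : Prop := ∀ i j : ℤ, i < 0 → 0 < j → ¬ P.lt i j

/-- `P` has height `(1,1)`: `P⁺` has height exactly one and `P` has height exactly one. -/
def Height11 (P : TypeCPoset n) : Prop :=
  P.HeightOne ∧ ∃ i j : ℤ, 0 < i ∧ 0 < j ∧ P.lt i j

/-- `P` has height `(0,1)`: `P⁺` has height zero and `P` has height exactly one. -/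
def Height01 (P : TypeCPoset n) : Prop :=
  P.HeightOne ∧ (∀ i j : ℤ, 0 < i → 0 < j → ¬ P.lt i j) ∧ ∃ i j : ℤ, P.lt i j

end TypeCPoset

/-- The vertex set of the relation graph: the positive elements `{1, …, n}`. -/
abbrev Pos (n : ℕ) : Type := {i : ℤ // i ∈ Finset.Icc (1 : ℤ) (n : ℤ)}

/-- The matrix index set `{-n, …, -1, 1, …, n}`. -/
abbrev Idx (n : ℕ) : Type := {i : ℤ // i ∈ (Finset.Icc (-(n : ℤ)) (n : ℤ)).erase 0}

/-- Negation on the index set. -/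
def Idx.neg {n : ℕ} (a : Idx n) : Idx n :=
  ⟨-a.val, by
    have h := a.property
    simp only [Finset.mem_erase, Finset.mem_Icc] at h ⊢
    omega⟩

/-- A positive vertex as a matrix index. -/
def Pos.toIdx {n : ℕ} (i : Pos n) : Idx n :=
  ⟨i.val, by
    have h := i.property
    simp only [Finset.mem_erase, Finset.mem_Icc] at h ⊢
    omega⟩

/-- `2n × 2n` complex matrices, with rows and columns indexed by `{-n, …, -1, 1, …, n}`. -/
abbrev Mat (n : ℕ) : Type := Matrix (Idx n) (Idx n) ℂ

namespace TypeCPoset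

variable {n : ℕ}

/-- `D_i = E_{-i,-i} - E_{i,i}`. -/
def Dmat (i : Pos n) : Mat n :=
  Matrix.single i.toIdx.neg i.toIdx.neg 1 - Matrix.single i.toIdx i.toIdx 1

/-- `R^±_{i,j} = E_{-i,j} + E_{-j,i}`. -/
def Rpm (i j : Pos n) : Mat n :=
  Matrix.single i.toIdx.neg j.toIdx 1 + Matrix.single j.toIdx.neg i.toIdx 1

/-- `R_{i,j} = E_{-j,-i} - E_{i,j}`. -/
def Rdash (i j : Pos n) : Mat n :=
  Matrix.single j.toIdx.neg i.toIdx.neg 1 - Matrix.single i.toIdx j.toIdx 1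

/-- `E_{-i,i}`. -/
def Eloop (i : Pos n) : Mat n := Matrix.single i.toIdx.neg i.toIdx 1

/-- The standard spanning set of the type-C Lie poset algebra `g_C(P)`. -/
def gcSet (P : TypeCPoset n) : Set (Mat n) :=
  {M | (∃ i : Pos n, M = Dmat i)
      ∨ (∃ i j : Pos n, P.lt (-j.val) (-i.val) ∧ M = Rdash i j)
      ∨ (∃ i j : Pos n, P.lt (-i.val) j.val ∧ P.lt (-j.val) i.val ∧ M = Rpm i j)
      ∨ (∃ i : Pos n, P.lt (-i.val) i.val ∧ M = Eloop i)}

/-- The simple graph underlying the relation graph `RG(P)`: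
vertices `{1, …, n}`, with `i` adjacent to `j` (for `i ≠ j`) whenever there is a
(dashed or non-dashed) edge between them. -/
def RG (P : TypeCPoset n) : SimpleGraph (Pos n) where
  Adj i j := i ≠ j ∧ (P.lt (-i.val) j.val ∨ P.lt (-j.val) i.val ∨
      P.lt (-i.val) (-j.val) ∨ P.lt (-j.val) (-i.val))
  symm := by
    refine ⟨?_⟩
    intro i j h
    exact ⟨h.1.symm, by tauto⟩
  loopless := by
    refine ⟨?_⟩
    intro i h
    exact h.1 rfl

/-- `RG(P)` has a (non-dashed) self-loop at vertex `i`, i.e. `-i ≺ i`. -/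
def HasLoopAt (P : TypeCPoset n) (i : Pos n) : Prop := P.lt (-i.val) i.val

/-- There is a dashed edge `{i,j}` in `RG(P)`. -/
def DashedEdge (P : TypeCPoset n) (i j : Pos n) : Prop :=
  P.lt (-i.val) (-j.val) ∨ P.lt (-j.val) (-i.val)

/-- There is a non-dashed edge `{i,j}` in `RG(P)` (a self-loop when `i = j`). -/
def NonDashedEdge (P : TypeCPoset n) (i j : Pos n) : Prop :=
  P.lt (-i.val) j.val ∨ P.lt (-j.val) i.val

open scoped Classical in
/-- The set of non-dashed edges of `RG(P)` (including self-loops). -/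
noncomputable def edgesND (P : TypeCPoset n) : Finset (Sym2 (Pos n)) :=
  Finset.univ.filter fun e => ∃ i j : Pos n, e = Sym2.mk i j ∧ NonDashedEdge P i j

open scoped Classical in
/-- The set of dashed edges of `RG(P)`. -/
noncomputable def edgesD (P : TypeCPoset n) : Finset (Sym2 (Pos n)) :=
  Finset.univ.filter fun e => ∃ i j : Pos n, e = Sym2.mk i j ∧ i ≠ j ∧ DashedEdge P i j

/-- `|E(P)|`, the number of edges of `RG(P)`. -/
noncomputable def numEdges (P : TypeCPoset n) : ℕ := (P.edgesND).card + (P.edgesD).card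

/-- The cycles of `RG(P)`, recorded by their edge sets: a self-loop at `v`, or a cycle
of the underlying simple graph.  A cycle has an odd (resp. even) number of vertices
iff its edge set has odd (resp. even) cardinality. -/
def cycles (P : TypeCPoset n) : Set (Finset (Sym2 (Pos n))) :=
  {s | ∃ v : Pos n, P.HasLoopAt v ∧ s = {Sym2.mk v v}} ∪
  {s | ∃ (v : Pos n) (p : (RG P).Walk v v), p.IsCycle ∧ s = p.edges.toFinset}

/-- The cycles of `RG(P)` contained in the connected component `c`. -/
def cyclesIn (P : TypeCPoset n) (c : (RG P).ConnectedComponent) :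
    Set (Finset (Sym2 (Pos n))) :=
  {s | ∃ v : Pos n, (RG P).connectedComponentMk v = c ∧
    ((P.HasLoopAt v ∧ s = {Sym2.mk v v}) ∨
      ∃ p : (RG P).Walk v v, p.IsCycle ∧ s = p.edges.toFinset)}

/-- `η(P)`: the number of connected components of `RG(P)` containing no odd cycles. -/
noncomputable def eta (P : TypeCPoset n) : ℕ :=
  Nat.card {c : (RG P).ConnectedComponent // ¬ ∃ s ∈ P.cyclesIn c, Odd s.card}

/-- The vertices visited by a cycle, recorded by its edge set. -/
def cycleVerts (s : Finset (Sym2 (Pos n))) : Set (Pos n) := {v | ∃ e ∈ s, v ∈ e}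

end TypeCPoset

section LieDefs

variable (L : Type*) [LieRing L] [LieAlgebra ℂ L]

/-- The kernel of the bilinear form `B_φ(x, y) = φ⁅x, y⁆`. -/
def coadjKernel (φ : Module.Dual ℂ L) : Submodule ℂ L where
  carrier := {x | ∀ y : L, φ ⁅x, y⁆ = 0}
  add_mem' := by
    intro a b ha hb y
    simp only [Set.mem_setOf_eq] at ha hb ⊢
    rw [add_lie, map_add, ha y, hb y, add_zero]
  zero_mem' := by
    intro y
    rw [zero_lie, map_zero]
  smul_mem' := by
    intro c x hx y
    simp only [Set.mem_setOf_eq] at hx ⊢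
    rw [smul_lie, map_smul, hx y, smul_zero]

/-- The index of a Lie algebra: `ind g = min_{φ ∈ g*} dim ker(B_φ)`. -/
noncomputable def lieIndex : ℕ :=
  sInf (Set.range fun φ : Module.Dual ℂ L => Module.finrank ℂ (coadjKernel L φ))

/-- `φ` is a contact form on `L`: `L` is odd-dimensional and the restriction of
`B_φ(x, y) = φ⁅x, y⁆` to `ker φ` is nondegenerate. -/
def IsContactForm (φ : Module.Dual ℂ L) : Prop :=
  Odd (Module.finrank ℂ L) ∧
    ∀ x : L, φ x = 0 → (∀ y : L, φ y = 0 → φ ⁅x, y⁆ = 0) → x = 0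

/-- `L` is a contact Lie algebra. -/
def IsContact : Prop := ∃ φ : Module.Dual ℂ L, IsContactForm L φ

end LieDefs

end LiePoset

namespace LiePoset

section Aux

attribute [local instance 100] LieRing.ofAssociativeRing

open TypeCPoset

variable {n : ℕ}

lemma Pos.val_pos (i : Pos n) : 0 < i.val := by
  have := i.2
  simp only [Finset.mem_Icc] at this
  omega

lemma Pos.toIdx_val (i : Pos n) : (Pos.toIdx i).val = i.val := rfl

lemma Idx.neg_val (a : Idx n) : (Idx.neg a).val = -a.val := rfl

@[simp] lemma toIdx_inj {i j : Pos n} : Pos.toIdx i = Pos.toIdx j ↔ i = j := by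
  constructor
  · intro h
    exact Subtype.ext (by have := congrArg Subtype.val h; exact this)
  · rintro rfl; rfl

@[simp] lemma negIdx_inj {i j : Pos n} : (Pos.toIdx i).neg = (Pos.toIdx j).neg ↔ i = j := by
  constructor
  · intro h
    have : (-(i.val) : ℤ) = -(j.val) := by
      have := congrArg Subtype.val h; exact this
    exact Subtype.ext (by omega)
  · rintro rfl; rfl

@[simp] lemma toIdx_ne_negIdx (i j : Pos n) : Pos.toIdx i ≠ (Pos.toIdx j).neg := by
  have hi := Pos.val_pos i; have hj := Pos.val_pos j
  intro h
  have : (i.val : ℤ) = -(j.val) := by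
    simpa [Subtype.ext_iff, Idx.neg_val, Pos.toIdx_val] using h
  omega

@[simp] lemma negIdx_ne_toIdx (i j : Pos n) : (Pos.toIdx i).neg ≠ Pos.toIdx j :=
  fun h => (toIdx_ne_negIdx j i) h.symm

variable {P : TypeCPoset n}

lemma TypeCPoset.lt_flip {i j : ℤ} (h : P.lt i j) (hij : i ≠ -j) : P.lt (-j) (-i) :=
  ⟨(P.nsymm hij).mp h.1, fun hc => h.2 (by omega)⟩

/-- The "relation-type" generators of `g_C(P)` (everything except the `Dmat`s). -/
def IsRel (P : TypeCPoset n) (M : Mat n) : Prop :=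
  (∃ i j : Pos n, P.lt (-j.val) (-i.val) ∧ M = Rdash i j)
  ∨ (∃ i j : Pos n, P.lt (-i.val) j.val ∧ P.lt (-j.val) i.val ∧ M = Rpm i j)
  ∨ (∃ i : Pos n, P.lt (-i.val) i.val ∧ M = Eloop i)

lemma IsRel.mem_gcSet {M : Mat n} (h : IsRel P M) : M ∈ gcSet P := Or.inr h

lemma rel_mul_rel (hP : P.HeightOne) {M N : Mat n} (hM : IsRel P M) (hN : IsRel P N) :
    M * N = 0 := by
  obtain (⟨i, j, h1, rfl⟩ | ⟨i, j, h1a, h1b, rfl⟩ | ⟨i, h1, rfl⟩) := hM <;>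
    obtain (⟨k, l, h2, rfl⟩ | ⟨k, l, h2a, h2b, rfl⟩ | ⟨k, h2, rfl⟩) := hN
  · -- Rdash * Rdash
    by_cases hil : i = l
    · subst hil; exact absurd (hP _ _ _ h1 h2) id
    · by_cases hjk : j = k
      · subst hjk; exact absurd (hP _ _ _ h2 h1) id
      · simp [Rdash, sub_mul, mul_sub, hil, hjk]
  · -- Rdash * Rpm
    by_cases hik : i = k
    · subst hik; exact absurd (hP _ _ _ h1 h2a) id
    · by_cases hil : i = l
      · subst hil; exact absurd (hP _ _ _ h1 h2b) id
      · simp [Rdash, Rpm, sub_mul, mul_add, hik, hil]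
  · -- Rdash * Eloop
    by_cases hik : i = k
    · subst hik; exact absurd (hP _ _ _ h1 h2) id
    · simp [Rdash, Eloop, sub_mul, hik]
  · -- Rpm * Rdash
    by_cases hjk : j = k
    · subst hjk; exact absurd (hP _ _ _ h2 h1b) id
    · by_cases hik : i = k
      · subst hik; exact absurd (hP _ _ _ h2 h1a) id
      · simp [Rdash, Rpm, add_mul, mul_sub, hik, hjk]
  · -- Rpm * Rpm
    simp [Rpm, add_mul, mul_add]
  · -- Rpm * Eloop
    simp [Rpm, Eloop, add_mul]
  · -- Eloop * Rdash
    by_cases hik : i = k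
    · subst hik; exact absurd (hP _ _ _ h2 h1) id
    · simp [Eloop, Rdash, mul_sub, hik, Ne.symm hik]
  · -- Eloop * Rpm
    simp [Eloop, Rpm, mul_add]
  · -- Eloop * Eloop
    simp [Eloop]

lemma lie_rel_rel (hP : P.HeightOne) {M N : Mat n} (hM : IsRel P M) (hN : IsRel P N) :
    ⁅M, N⁆ = 0 := by
  rw [Ring.lie_def, rel_mul_rel hP hM hN, rel_mul_rel hP hN hM, sub_zero]

section Aux2

open TypeCPoset

variable {n : ℕ} {P : TypeCPoset n}

lemma lie_D_Rpm {a b : Pos n} (hab : a ≠ b) (l : Pos n) :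
    ⁅Dmat l, Rpm a b⁆ =
      (((if l = a then 1 else 0) + (if l = b then 1 else 0) : ℂ)) • Rpm a b := by
  rw [Ring.lie_def]
  by_cases hla : l = a <;> by_cases hlb : l = b
  · exact absurd (hla.symm.trans hlb) hab
  · subst hla
    simp [Dmat, Rpm, sub_mul, mul_sub, add_mul, mul_add, hlb, Ne.symm hlb]
    try abel
  · subst hlb
    simp [Dmat, Rpm, sub_mul, mul_sub, add_mul, mul_add, hla, Ne.symm hla]
    try abel
  · simp [Dmat, Rpm, sub_mul, mul_sub, add_mul, mul_add, hla, hlb, Ne.symm hla, Ne.symm hlb]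

lemma lie_D_Rdash {a b : Pos n} (hab : a ≠ b) (l : Pos n) :
    ⁅Dmat l, Rdash a b⁆ =
      (((if l = a then -1 else 0) + (if l = b then 1 else 0) : ℂ)) • Rdash a b := by
  rw [Ring.lie_def]
  by_cases hla : l = a <;> by_cases hlb : l = b
  · exact absurd (hla.symm.trans hlb) hab
  · subst hla
    simp [Dmat, Rdash, sub_mul, mul_sub, hlb, Ne.symm hlb, smul_sub]
    try abel
  · subst hlb
    simp [Dmat, Rdash, sub_mul, mul_sub, hla, Ne.symm hla, smul_sub]
    try abel
  · simp [Dmat, Rdash, sub_mul, mul_sub, hla, hlb, Ne.symm hla, Ne.symm hlb]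

/-- `tau a = -1` iff `a` is the tail of a dashed relation. -/
noncomputable def tau (P : TypeCPoset n) (a : Pos n) : ℂ := by
  classical exact if ∃ c : Pos n, P.lt (-c.val) (-a.val) then -1 else 1

lemma tau_eq_neg_one {a : Pos n} (c : Pos n) (h : P.lt (-c.val) (-a.val)) : tau P a = -1 := by
  unfold tau
  rw [if_pos ⟨c, h⟩]

lemma tau_eq_one (hP : P.HeightOne) {a : Pos n} {m : ℤ} (h : P.lt (-a.val) m) : tau P a = 1 := by
  unfold tau
  rw [if_neg]
  rintro ⟨c, hc⟩
  exact hP _ _ _ hc h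

/-- A chosen generator of `g_C(P)` for the edge `{a, b}` of `RG(P)`. -/
noncomputable def edgeGen (P : TypeCPoset n) (a b : Pos n) : Mat n := by
  classical exact
    if (P.lt (-a.val) b.val ∨ P.lt (-b.val) a.val) then Rpm a b
    else if (P.lt (-b.val) (-a.val)) then Rdash a b
    else Rdash b a

/-- The coefficient of the weight of `edgeGen P a b` at the vertex `l`. -/
noncomputable def cof (P : TypeCPoset n) (a b l : Pos n) : ℂ :=
  (if l = a then tau P a else 0) + (if l = b then tau P b else 0)

lemma cof_eq_tau (a b l : Pos n) :
    cof P a b l = tau P l * ((if l = a then 1 else 0) + (if l = b then 1 else 0)) := by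
  unfold cof
  split_ifs <;> subst_vars <;> ring

lemma edgeGen_spec (hP : P.HeightOne) {a b : Pos n} (h : (RG P).Adj a b) :
    IsRel P (edgeGen P a b) ∧
      ∀ l : Pos n, ⁅Dmat l, edgeGen P a b⁆ = (cof P a b l) • edgeGen P a b := by
  obtain ⟨hab, hor⟩ := h
  have hab' : a.val ≠ b.val := fun hc => hab (Subtype.ext hc)
  unfold edgeGen
  split_ifs with h1 h2
  · -- non-dashed edge
    have hnd : P.lt (-a.val) b.val ∧ P.lt (-b.val) a.val := by
      rcases h1 with h | h
      · refine ⟨h, ?_⟩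
        have := TypeCPoset.lt_flip h (by omega)
        simpa using this
      · refine ⟨?_, h⟩
        have := TypeCPoset.lt_flip h (by omega)
        simpa using this
    have ta : tau P a = 1 := tau_eq_one hP hnd.1
    have tb : tau P b = 1 := tau_eq_one hP hnd.2
    refine ⟨Or.inr (Or.inl ⟨a, b, hnd.1, hnd.2, rfl⟩), fun l => ?_⟩
    have hc : cof P a b l = ((if l = a then 1 else 0) + (if l = b then 1 else 0) : ℂ) := by
      unfold cof; rw [ta, tb]
    rw [lie_D_Rpm hab l, hc]
  · -- dashed edge with tail `a`
    have ta : tau P a = -1 := tau_eq_neg_one b h2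
    have tb : tau P b = 1 := tau_eq_one hP (m := -a.val) h2
    refine ⟨Or.inl ⟨a, b, h2, rfl⟩, fun l => ?_⟩
    have hc : cof P a b l = ((if l = a then -1 else 0) + (if l = b then 1 else 0) : ℂ) := by
      unfold cof; rw [ta, tb]
    rw [lie_D_Rdash hab l, hc]
  · -- dashed edge with tail `b`
    have h3 : P.lt (-a.val) (-b.val) := by
      rcases hor with h | h | h | h
      · exact absurd (Or.inl h) h1
      · exact absurd (Or.inr h) h1
      · exact h
      · exact absurd h h2
    have ta : tau P a = 1 := tau_eq_one hP (m := -b.val) h3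
    have tb : tau P b = -1 := tau_eq_neg_one a h3
    refine ⟨Or.inl ⟨b, a, h3, rfl⟩, fun l => ?_⟩
    have hc : cof P a b l = ((if l = b then -1 else 0) + (if l = a then 1 else 0) : ℂ) := by
      unfold cof; rw [ta, tb, add_comm]
    rw [lie_D_Rdash (Ne.symm hab) l, hc]

lemma abs_negIdx_val (a : Pos n) : |((Pos.toIdx a).neg).val| = a.val := by
  rw [Idx.neg_val, Pos.toIdx_val, abs_neg, abs_of_pos (Pos.val_pos a)]

lemma abs_toIdx_val (a : Pos n) : |(Pos.toIdx a).val| = a.val := by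
  rw [Pos.toIdx_val, abs_of_pos (Pos.val_pos a)]

lemma edgeGen_entry (P : TypeCPoset n) {a b : Pos n} (hab : a ≠ b) :
    ∃ q r : Idx n, |q.val| = a.val ∧ |r.val| = b.val ∧ edgeGen P a b q r ≠ 0 := by
  unfold edgeGen
  split_ifs with h1 h2
  · refine ⟨(Pos.toIdx a).neg, Pos.toIdx b, abs_negIdx_val a, abs_toIdx_val b, ?_⟩
    simp [Rpm, Matrix.add_apply, hab, Ne.symm hab]
  · refine ⟨Pos.toIdx a, Pos.toIdx b, abs_toIdx_val a, abs_toIdx_val b, ?_⟩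
    simp [Rdash, Matrix.sub_apply]
  · refine ⟨(Pos.toIdx a).neg, (Pos.toIdx b).neg, abs_negIdx_val a, abs_negIdx_val b, ?_⟩
    simp [Rdash, Matrix.sub_apply]

lemma add_entry_cases {i j k l q r : Idx n} {c d : ℂ}
    (h : (Matrix.single i j c + Matrix.single k l d) q r ≠ 0) :
    (i = q ∧ j = r) ∨ (k = q ∧ l = r) := by
  by_contra hc
  rw [not_or] at hc
  exact h (by rw [Matrix.add_apply, Matrix.single_apply_of_ne _ _ _ _ _ hc.1,
    Matrix.single_apply_of_ne _ _ _ _ _ hc.2, add_zero])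

lemma sub_entry_cases {i j k l q r : Idx n} {c d : ℂ}
    (h : (Matrix.single i j c - Matrix.single k l d) q r ≠ 0) :
    (i = q ∧ j = r) ∨ (k = q ∧ l = r) := by
  by_contra hc
  rw [not_or] at hc
  exact h (by rw [Matrix.sub_apply, Matrix.single_apply_of_ne _ _ _ _ _ hc.1,
    Matrix.single_apply_of_ne _ _ _ _ _ hc.2, sub_zero])

lemma edgeGen_support (P : TypeCPoset n) (a b : Pos n) (q r : Idx n)
    (h : edgeGen P a b q r ≠ 0) :
    (|q.val| = a.val ∧ |r.val| = b.val) ∨ (|q.val| = b.val ∧ |r.val| = a.val) := by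
  unfold edgeGen at h
  split_ifs at h with h1 h2
  · rcases add_entry_cases h with ⟨hq, hr⟩ | ⟨hq, hr⟩
    · exact Or.inl ⟨by rw [← hq]; exact abs_negIdx_val a, by rw [← hr]; exact abs_toIdx_val b⟩
    · exact Or.inr ⟨by rw [← hq]; exact abs_negIdx_val b, by rw [← hr]; exact abs_toIdx_val a⟩
  · rcases sub_entry_cases h with ⟨hq, hr⟩ | ⟨hq, hr⟩
    · exact Or.inr ⟨by rw [← hq]; exact abs_negIdx_val b, by rw [← hr]; exact abs_negIdx_val a⟩
    · exact Or.inl ⟨by rw [← hq]; exact abs_toIdx_val a, by rw [← hr]; exact abs_toIdx_val b⟩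
  · rcases sub_entry_cases h with ⟨hq, hr⟩ | ⟨hq, hr⟩
    · exact Or.inl ⟨by rw [← hq]; exact abs_negIdx_val a, by rw [← hr]; exact abs_negIdx_val b⟩
    · exact Or.inr ⟨by rw [← hq]; exact abs_toIdx_val b, by rw [← hr]; exact abs_toIdx_val a⟩

end Aux2

section Aux3

open TypeCPoset

variable {n : ℕ} {P : TypeCPoset n}

lemma walk_edges_getElem {V : Type*} {G : SimpleGraph V} {u v : V} (p : G.Walk u v) :
    ∀ (t : ℕ) (ht : t < p.length),
      p.edges[t]'(by rw [SimpleGraph.Walk.length_edges]; exact ht) =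
        Sym2.mk (p.getVert t) (p.getVert (t + 1)) := by
  induction p with
  | nil => intro t ht; simp at ht
  | cons h q ih =>
    intro t ht
    cases t with
    | zero =>
      simp [SimpleGraph.Walk.edges_cons, SimpleGraph.Walk.getVert_zero,
        SimpleGraph.Walk.getVert_cons_succ]
    | succ t =>
      have ht' : t < q.length := by
        simpa [SimpleGraph.Walk.length_cons] using ht
      simp only [SimpleGraph.Walk.edges_cons, SimpleGraph.Walk.getVert_cons_succ,
        List.getElem_cons_succ]
      exact ih t ht'

lemma telescope_sum {L : ℕ} (hL : Even L) (w : ℕ → Pos n) (hw : w L = w 0) (i : Pos n) :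
    ∑ t ∈ Finset.range L, (-1 : ℂ) ^ t *
      ((if i = w t then 1 else 0) + (if i = w (t + 1) then 1 else 0)) = 0 := by
  have hs1 := Finset.sum_range_succ' (fun t => (-1 : ℂ) ^ t * (if i = w t then 1 else 0)) L
  rw [Finset.sum_range_succ] at hs1
  have hFL : ((-1 : ℂ) ^ L * (if i = w L then 1 else 0))
      = (-1 : ℂ) ^ 0 * (if i = w 0 then 1 else 0) := by
    rw [hw, hL.neg_one_pow, pow_zero]
  have hsplit : ∀ t ∈ Finset.range L, (-1 : ℂ) ^ t *
      ((if i = w t then 1 else 0) + (if i = w (t + 1) then 1 else 0))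
      = ((-1 : ℂ) ^ t * (if i = w t then 1 else 0))
        - ((-1 : ℂ) ^ (t + 1) * (if i = w (t + 1) then 1 else 0)) := by
    intro t _
    rw [pow_succ]
    ring
  rw [Finset.sum_congr rfl hsplit, Finset.sum_sub_distrib]
  linear_combination hs1 - hFL

lemma phi_lie_sum {g : LieSubalgebra ℂ (Mat n)} (φ : Module.Dual ℂ ↥g)
    (m : ↥g) (L : ℕ) (c : ℕ → ℂ) (X : ℕ → ↥g) :
    φ ⁅∑ t ∈ Finset.range L, c t • X t, m⁆
      = ∑ t ∈ Finset.range L, c t * φ ⁅X t, m⁆ := by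
  let Ψ : ↥g →ₗ[ℂ] ℂ := -(φ ∘ₗ (LieAlgebra.ad ℂ ↥g m))
  have hΨ : ∀ z, Ψ z = φ ⁅z, m⁆ := by
    intro z
    show -(φ (LieAlgebra.ad ℂ ↥g m z)) = φ ⁅z, m⁆
    rw [LieAlgebra.ad_apply, ← map_neg, lie_skew]
  rw [← hΨ, map_sum]
  refine Finset.sum_congr rfl fun t _ => ?_
  rw [map_smul, smul_eq_mul, hΨ]

lemma bracket_vanish {g : LieSubalgebra ℂ (Mat n)}
    (hg : g.toSubmodule = Submodule.span ℂ (gcSet P))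
    (φ : Module.Dual ℂ ↥g) (x : ↥g)
    (h1 : ∀ (l : Pos n) (hl : Dmat l ∈ g), φ ⁅x, (⟨Dmat l, hl⟩ : ↥g)⁆ = 0)
    (h2 : ∀ (M : Mat n) (hM : IsRel P M) (hMg : M ∈ g), φ ⁅x, (⟨M, hMg⟩ : ↥g)⁆ = 0) :
    ∀ y : ↥g, φ ⁅x, y⁆ = 0 := by
  set ψ : ↥g →ₗ[ℂ] ℂ := φ ∘ₗ (LieAlgebra.ad ℂ ↥g x) with hψ
  have hψ_apply : ∀ y, ψ y = φ ⁅x, y⁆ := by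
    intro y
    show φ (LieAlgebra.ad ℂ ↥g x y) = φ ⁅x, y⁆
    rw [LieAlgebra.ad_apply]
  have hsub : Submodule.span ℂ (gcSet P) ≤ (LinearMap.ker ψ).map g.toSubmodule.subtype := by
    rw [Submodule.span_le]
    rintro M hM
    have hMg : M ∈ g := by
      have : M ∈ g.toSubmodule := by
        rw [hg]; exact Submodule.subset_span hM
      exact this
    refine ⟨⟨M, hMg⟩, ?_, rfl⟩
    rw [SetLike.mem_coe, LinearMap.mem_ker, hψ_apply]
    rcases hM with ⟨i, rfl⟩ | h
    · exact h1 i hMg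
    · exact h2 M h hMg
  intro y
  have hy : (y : Mat n) ∈ Submodule.span ℂ (gcSet P) := by
    rw [← hg]; exact y.2
  obtain ⟨z, hz, hzy⟩ := hsub hy
  have hzz : z = y := Subtype.ext hzy
  rw [← hψ_apply, ← hzz]
  exact LinearMap.mem_ker.mp hz

end Aux3

end Aux

end LiePoset

namespace LiePoset

attribute [local instance 100] LieRing.ofAssociativeRing

/-- **Proposition.** Let `P` be a connected type-C poset of height one.  If `RG(P)`
contains an even cycle, then `g_C(P)` is not contact. -/
theorem not_contact_of_even_cycle (n : ℕ) (P : TypeCPoset n)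
    (hP : P.HeightOne) (hconn : (TypeCPoset.RG P).Connected)
    (heven : ∃ s ∈ P.cycles, Even s.card)
    (g : LieSubalgebra ℂ (Mat n))
    (hg : g.toSubmodule = Submodule.span ℂ (TypeCPoset.gcSet P)) :
    ¬ IsContact ↥g := by
  classical
  rintro ⟨φ, hodd, hnd⟩
  obtain ⟨s, hs, hev⟩ := heven
  rcases hs with ⟨v, -, rfl⟩ | ⟨v, p, hcyc, rfl⟩
  · rw [Finset.card_singleton, Nat.even_iff] at hev
    omega
  · have hL := rfl (a := p.length)
    have hnodup : p.edges.Nodup := hcyc.isCircuit.isTrail.edges_nodup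
    have hevenL : Even p.length := by
      rwa [List.toFinset_card_of_nodup hnodup, SimpleGraph.Walk.length_edges] at hev
    have hL3 : 3 ≤ p.length := hcyc.three_le_length
    have hVL : p.getVert p.length = p.getVert 0 := by
      rw [SimpleGraph.Walk.getVert_length, SimpleGraph.Walk.getVert_zero]
    have hAdj : ∀ t, t < p.length →
        (TypeCPoset.RG P).Adj (p.getVert t) (p.getVert (t + 1)) :=
      fun t ht => p.adj_getVert_succ ht
    have hedist : ∀ t, t < p.length → t ≠ 0 →
        Sym2.mk (p.getVert t) (p.getVert (t + 1)) ≠ Sym2.mk (p.getVert 0) (p.getVert 1) := by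
      intro t ht ht0 hc
      have hlen : p.edges.length = p.length := SimpleGraph.Walk.length_edges p
      have e1 := walk_edges_getElem p t ht
      have e2 := walk_edges_getElem p 0 (by omega)
      have heq : p.edges[t]'(by omega) = p.edges[0]'(by omega) := by
        rw [e1, e2]
        exact hc
      have := (List.Nodup.getElem_inj_iff hnodup).mp heq
      omega
    have hmemg : ∀ t, t < p.length → edgeGen P (p.getVert t) (p.getVert (t + 1)) ∈ g := by
      intro t ht
      have h := ((edgeGen_spec hP (hAdj t ht)).1).mem_gcSet
      have : edgeGen P (p.getVert t) (p.getVert (t + 1)) ∈ g.toSubmodule := by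
        rw [hg]
        exact Submodule.subset_span h
      exact this
    set X : ℕ → ↥g := fun t =>
      if ht : t < p.length then
        ⟨edgeGen P (p.getVert t) (p.getVert (t + 1)), hmemg t ht⟩ else 0 with hX
    have hXcoe : ∀ t, t < p.length →
        (X t : Mat n) = edgeGen P (p.getVert t) (p.getVert (t + 1)) := by
      intro t ht
      simp [hX, ht]
    have hbD : ∀ t, t < p.length → ∀ (l : Pos n) (hl : TypeCPoset.Dmat l ∈ g),
        ⁅X t, (⟨TypeCPoset.Dmat l, hl⟩ : ↥g)⁆
          = (-(cof P (p.getVert t) (p.getVert (t + 1)) l)) • X t := by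
      intro t ht l hl
      have hspec := (edgeGen_spec hP (hAdj t ht)).2 l
      apply Subtype.ext
      rw [LieSubalgebra.coe_bracket]
      show ⁅(X t : Mat n), TypeCPoset.Dmat l⁆
        = (-(cof P (p.getVert t) (p.getVert (t + 1)) l)) • (X t : Mat n)
      rw [hXcoe t ht, ← lie_skew, hspec, neg_smul]
    have hbR : ∀ t, t < p.length → ∀ (M : Mat n), IsRel P M → ∀ (hMg : M ∈ g),
        ⁅X t, (⟨M, hMg⟩ : ↥g)⁆ = 0 := by
      intro t ht M hM hMg
      apply Subtype.ext
      rw [LieSubalgebra.coe_bracket, hXcoe t ht]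
      show ⁅edgeGen P (p.getVert t) (p.getVert (t + 1)), M⁆ = (0 : Mat n)
      exact lie_rel_rel hP (edgeGen_spec hP (hAdj t ht)).1 hM
    by_cases hA : ∃ t, t < p.length ∧ φ (X t) = 0
    · obtain ⟨t, ht, hbt⟩ := hA
      have hXne : X t ≠ 0 := by
        obtain ⟨q, r, -, -, hqr⟩ := edgeGen_entry P (hAdj t ht).ne
        intro hc
        apply hqr
        rw [← hXcoe t ht, hc]
        rfl
      apply hXne
      apply hnd (X t) hbt
      intro y _
      refine bracket_vanish (P := P) hg φ (X t) ?_ ?_ y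
      · intro l hl
        rw [hbD t ht l hl, map_smul, hbt, smul_zero]
      · intro M hM hMg
        rw [hbR t ht M hM hMg, map_zero]
    · push_neg at hA
      set c : ℕ → ℂ := fun t => (-1 : ℂ) ^ t * (φ (X t))⁻¹ with hc
      set x : ↥g := ∑ t ∈ Finset.range p.length, c t • X t with hxdef
      have hφx : φ x = 0 := by
        rw [hxdef, map_sum]
        have hcs : ∀ t ∈ Finset.range p.length, φ (c t • X t) = (-1 : ℂ) ^ t := by
          intro t ht'
          rw [Finset.mem_range] at ht'
          have hb := hA t ht'
          rw [map_smul, smul_eq_mul, hc]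
          field_simp
        rw [Finset.sum_congr rfl hcs, neg_one_geom_sum, if_pos hevenL]
      have hne01 : p.getVert 0 ≠ p.getVert 1 := (hAdj 0 (by omega)).ne
      obtain ⟨q, r, hq, hr, hqr⟩ := edgeGen_entry P hne01
      have hcoe : (x : Mat n) = ∑ t ∈ Finset.range p.length, c t • (X t : Mat n) := by
        rw [hxdef]
        show g.toSubmodule.subtype _ = _
        rw [map_sum]
        exact Finset.sum_congr rfl fun t _ => by rw [map_smul]; rfl
      have hxne : x ≠ 0 := by
        intro hzero
        have hentry : (x : Mat n) q r
            = c 0 * edgeGen P (p.getVert 0) (p.getVert 1) q r := by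
          rw [hcoe, Matrix.sum_apply]
          rw [Finset.sum_eq_single_of_mem 0 (Finset.mem_range.mpr (by omega))]
          · rw [Matrix.smul_apply, hXcoe 0 (by omega), smul_eq_mul]
            try norm_num
          · intro t ht' ht0
            rw [Matrix.smul_apply, hXcoe t (Finset.mem_range.mp ht')]
            suffices h : edgeGen P (p.getVert t) (p.getVert (t + 1)) q r = 0 by
              rw [h, smul_zero]
            by_contra hne
            rcases edgeGen_support P _ _ q r hne with ⟨h1, h2⟩ | ⟨h1, h2⟩
            · have hv0 : p.getVert t = p.getVert 0 := Subtype.ext (by rw [← h1, hq])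
              have hv1 : p.getVert (t + 1) = p.getVert 1 := Subtype.ext (by rw [← h2, hr])
              exact hedist t (Finset.mem_range.mp ht') ht0 (by rw [hv0, hv1])
            · have hv0 : p.getVert (t + 1) = p.getVert 0 := Subtype.ext (by rw [← h1, hq])
              have hv1 : p.getVert t = p.getVert 1 := Subtype.ext (by rw [← h2, hr])
              exact hedist t (Finset.mem_range.mp ht') ht0
                (by rw [hv0, hv1]; exact Sym2.eq_swap)
        have hz : (x : Mat n) q r = 0 := by rw [hzero]; rfl
        rw [hentry] at hz
        rcases mul_eq_zero.mp hz with h | h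
        · have hb0 := hA 0 (by omega)
          apply inv_ne_zero hb0
          simpa [hc] using h
        · exact hqr h
      apply hxne
      apply hnd x hφx
      intro y _
      refine bracket_vanish (P := P) hg φ x ?_ ?_ y
      · intro l hl
        rw [hxdef, phi_lie_sum]
        have heach : ∀ t ∈ Finset.range p.length,
            c t * φ ⁅X t, (⟨TypeCPoset.Dmat l, hl⟩ : ↥g)⁆
              = -((-1 : ℂ) ^ t * cof P (p.getVert t) (p.getVert (t + 1)) l) := by
          intro t ht'
          have ht'' := Finset.mem_range.mp ht'
          have hb := hA t ht''
          rw [hbD t ht'' l hl, map_smul, smul_eq_mul, hc]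
          field_simp
        rw [Finset.sum_congr rfl heach, Finset.sum_neg_distrib]
        have htel := telescope_sum (n := n) hevenL p.getVert hVL l
        have hsum0 : ∑ t ∈ Finset.range p.length,
            (-1 : ℂ) ^ t * cof P (p.getVert t) (p.getVert (t + 1)) l = 0 := by
          have hterm : ∀ t ∈ Finset.range p.length,
              (-1 : ℂ) ^ t * cof P (p.getVert t) (p.getVert (t + 1)) l
                = tau P l * ((-1 : ℂ) ^ t * ((if l = p.getVert t then 1 else 0)
                    + (if l = p.getVert (t + 1) then 1 else 0))) := by
            intro t _
            rw [cof_eq_tau]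
            ring
          rw [Finset.sum_congr rfl hterm, ← Finset.mul_sum, htel, mul_zero]
        rw [hsum0, neg_zero]
      · intro M hM hMg
        rw [hxdef, phi_lie_sum]
        refine Finset.sum_eq_zero fun t ht' => ?_
        rw [hbR t (Finset.mem_range.mp ht') M hM hMg, map_zero, mul_zero]

end LiePoset
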